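/- The difference of free energies in a DQAEM iteration satisfies β(𝒢(θ_{t+1}) − 𝒢(θ_t)) = (𝒰(θ_{t+1};θ_t) − 𝒰(θ_t;θ_t)) + KL(ρ(θ_t) ‖ ρ(θ_{t+1})), where KL is the quantum relative entropy. -/

import Mathlib

open Matrix

/-- Matrix logarithm of a Hermitian matrix, defined via the spectral decomposition. -/
noncomputable def matLog {n : Type*} [Fintype n] [DecidableEq n] {ρ : Matrix n n ℂ}
    (h : ρ.IsHermitian) : Matrix n n ℂ :=
  (h.eigenvectorUnitary : Matrix n n ℂ) *
    Matrix.diagonal (fun i => (Real.log (h.eigenvalues i) : ℂ)) *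
    star (h.eigenvectorUnitary : Matrix n n ℂ)

/-- The exponential of a Hermitian matrix agrees with applying `Real.exp` to its
eigenvalues in its spectral decomposition. -/
lemma exp_herm_eq_cfc {n : Type*} [Fintype n] [DecidableEq n]
    {M : Matrix n n ℂ} (hM : M.IsHermitian) :
    NormedSpace.exp M = hM.cfc Real.exp := by
  have hU : (hM.eigenvectorUnitary : Matrix n n ℂ) * star (hM.eigenvectorUnitary : Matrix n n ℂ) = 1 :=
    Unitary.mul_star_self_of_mem hM.eigenvectorUnitary.2
  have hinv : (hM.eigenvectorUnitary : Matrix n n ℂ)⁻¹ = star (hM.eigenvectorUnitary : Matrix n n ℂ) :=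
    Matrix.inv_eq_right_inv hU
  have hU' : star (hM.eigenvectorUnitary : Matrix n n ℂ) * (hM.eigenvectorUnitary : Matrix n n ℂ) = 1 :=
    Unitary.star_mul_self_of_mem hM.eigenvectorUnitary.2
  have hisunit : IsUnit (hM.eigenvectorUnitary : Matrix n n ℂ) :=
    ⟨⟨_, star (hM.eigenvectorUnitary : Matrix n n ℂ), hU, hU'⟩, rfl⟩
  conv_lhs => rw [hM.spectral_theorem, Unitary.conjStarAlgAut_apply, ← hinv]
  rw [Matrix.exp_conj _ _ hisunit, Matrix.exp_diagonal, hinv]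
  have key : (NormedSpace.exp (RCLike.ofReal ∘ hM.eigenvalues : n → ℂ))
      = (RCLike.ofReal ∘ Real.exp ∘ hM.eigenvalues : n → ℂ) := by
    rw [Pi.exp_def]
    funext i
    rw [← Complex.exp_eq_exp_ℂ]
    show Complex.exp (Complex.ofReal (hM.eigenvalues i)) = Complex.ofReal (Real.exp (hM.eigenvalues i))
    rw [Complex.ofReal_exp]
  rw [key]
  rfl

/-- For a Gibbs state `ρ = (Tr e^M)⁻¹ • e^M` of a Hermitian matrix `M`:
the partition function is a positive real, and the matrix logarithm of `ρ`
is `M - log(Tr e^M) • 1`. -/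
lemma gibbs_trace_matLog {n : Type*} [Fintype n] [DecidableEq n] [Nonempty n]
    {M : Matrix n n ℂ} (hM : M.IsHermitian) {ρ : Matrix n n ℂ}
    (hρ : ρ = (Matrix.trace (NormedSpace.exp M))⁻¹ • NormedSpace.exp M)
    (h : ρ.IsHermitian) :
    Matrix.trace (NormedSpace.exp M) = ((Matrix.trace (NormedSpace.exp M)).re : ℂ) ∧
    0 < (Matrix.trace (NormedSpace.exp M)).re ∧
    matLog h = M -
      algebraMap ℝ (Matrix n n ℂ) (Real.log (Matrix.trace (NormedSpace.exp M)).re) := by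
  have hU' : star (hM.eigenvectorUnitary : Matrix n n ℂ) * (hM.eigenvectorUnitary : Matrix n n ℂ) = 1 :=
    Unitary.star_mul_self_of_mem hM.eigenvectorUnitary.2
  set Z : ℝ := ∑ i, Real.exp (hM.eigenvalues i) with hZ
  have hZpos : 0 < Z := Finset.sum_pos (fun i _ => Real.exp_pos _) Finset.univ_nonempty
  have htr : Matrix.trace (NormedSpace.exp M) = (Z : ℂ) := by
    rw [exp_herm_eq_cfc hM]
    unfold Matrix.IsHermitian.cfc
    simp only [Unitary.conjStarAlgAut_apply]
    rw [Matrix.trace_mul_cycle, hU', one_mul, Matrix.trace_diagonal, hZ]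
    push_cast
    simp [Complex.ofReal_exp]
  have hre : (Matrix.trace (NormedSpace.exp M)).re = Z := by rw [htr]; simp
  have hself : IsSelfAdjoint M := hM
  set f : ℝ → ℝ := fun x => Z⁻¹ * Real.exp x with hf
  have hρ_cfc : ρ = cfc f M := by
    rw [hρ, htr, Matrix.IsHermitian.cfc_eq hM f, exp_herm_eq_cfc hM]
    unfold Matrix.IsHermitian.cfc
    simp only [Unitary.conjStarAlgAut_apply]
    have hd : (RCLike.ofReal ∘ f ∘ hM.eigenvalues : n → ℂ)
        = ((Z : ℂ)⁻¹) • (RCLike.ofReal ∘ Real.exp ∘ hM.eigenvalues) := by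
      funext i
      show (Complex.ofReal (Z⁻¹ * Real.exp (hM.eigenvalues i)))
          = (Z : ℂ)⁻¹ • Complex.ofReal (Real.exp (hM.eigenvalues i))
      rw [smul_eq_mul, Complex.ofReal_mul, Complex.ofReal_inv]
    rw [hd, Matrix.diagonal_smul, mul_smul_comm, smul_mul_assoc]
  have hlog : matLog h = cfc Real.log ρ := by
    rw [Matrix.IsHermitian.cfc_eq h Real.log]
    rfl
  have hfc : ContinuousOn f (spectrum ℝ M) :=
    (continuous_const.mul Real.continuous_exp).continuousOn
  have hgc : ContinuousOn Real.log (f '' spectrum ℝ M) := by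
    apply Real.continuousOn_log.mono
    rintro - ⟨x, -, rfl⟩
    simp only [Set.mem_compl_iff, Set.mem_singleton_iff, hf]
    positivity
  have hcomp : matLog h = cfc (Real.log ∘ f) M := by
    rw [hlog, hρ_cfc, cfc_comp Real.log f M hself hgc hfc]
  have hfun : (Real.log ∘ f) = fun x : ℝ => x - Real.log Z := by
    funext x
    simp only [Function.comp_apply, hf]
    rw [Real.log_mul (inv_ne_zero hZpos.ne') (Real.exp_ne_zero x), Real.log_inv, Real.log_exp]
    ring
  refine ⟨by rw [htr]; simp, by rw [hre]; exact hZpos, ?_⟩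
  rw [hcomp, hfun, hre,
    cfc_sub (fun x : ℝ => x) (fun _ : ℝ => Real.log Z) M continuous_id.continuousOn
      continuous_const.continuousOn,
    cfc_id' ℝ M hself, cfc_const (Real.log Z) M hself]

/-- DQAEM free-energy decomposition:
β(𝒢(θ_{t+1}) − 𝒢(θ_t)) = (𝒰(θ_{t+1};θ_t) − 𝒰(θ_t;θ_t)) + KL(ρ(θ_t)‖ρ(θ_{t+1})),
where ρ(θ) = e^{−βA(θ)}/Tr e^{−βA(θ)}, 𝒢(θ) = (1/β)·ln Tr e^{−βA(θ)},
𝒰(θ;θ') = Tr[ρ(θ')·(−βA(θ))], and KL is the quantum relative entropy. -/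
theorem dqaem_free_energy_difference
    {K : ℕ} (hK : 0 < K) {Θ : Type*}
    (A : Θ → Matrix (Fin K) (Fin K) ℂ) (hA : ∀ θ, (A θ).IsHermitian)
    (β : ℝ) (hβ : 0 < β)
    (ρ : Θ → Matrix (Fin K) (Fin K) ℂ)
    (hρ : ∀ θ, ρ θ = (Matrix.trace (NormedSpace.exp (-(β : ℂ) • A θ)))⁻¹ •
                       NormedSpace.exp (-(β : ℂ) • A θ))
    (𝒢 : Θ → ℝ)
    (h𝒢 : ∀ θ, 𝒢 θ = (1 / β) *
        Real.log (Matrix.trace (NormedSpace.exp (-(β : ℂ) • A θ))).re)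
    (𝒰 : Θ → Θ → ℝ)
    (h𝒰 : ∀ θ θ', 𝒰 θ θ' = (Matrix.trace (ρ θ' * (-(β : ℂ) • A θ))).re)
    (θt θt1 : Θ)
    (hherm0 : (ρ θt).IsHermitian) (hherm1 : (ρ θt1).IsHermitian) :
    β * (𝒢 θt1 - 𝒢 θt) =
      (𝒰 θt1 θt - 𝒰 θt θt) +
        (Matrix.trace (ρ θt * (matLog hherm0 - matLog hherm1))).re := by
  have : Nonempty (Fin K) := ⟨⟨0, hK⟩⟩
  have hM : ∀ θ, ((-(β : ℂ)) • A θ).IsHermitian := by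
    intro θ
    have : star (-(β : ℂ)) = -(β : ℂ) := by
      simp [Complex.star_def, Complex.conj_ofReal]
    unfold Matrix.IsHermitian
    rw [Matrix.conjTranspose_smul, this, (hA θ).eq]
  obtain ⟨htr0, hpos0, hlog0⟩ := gibbs_trace_matLog (hM θt) (hρ θt) hherm0
  obtain ⟨htr1, hpos1, hlog1⟩ := gibbs_trace_matLog (hM θt1) (hρ θt1) hherm1
  set Z0 : ℝ := (Matrix.trace (NormedSpace.exp (-(β : ℂ) • A θt))).re with hZ0
  set Z1 : ℝ := (Matrix.trace (NormedSpace.exp (-(β : ℂ) • A θt1))).re with hZ1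
  set c0 : ℝ := Real.log Z0 with hc0
  set c1 : ℝ := Real.log Z1 with hc1
  have htrρ : Matrix.trace (ρ θt) = 1 := by
    rw [hρ θt, Matrix.trace_smul, htr0, smul_eq_mul,
      inv_mul_cancel₀ (Complex.ofReal_ne_zero.mpr hpos0.ne')]
  have hexpand : ρ θt * (matLog hherm0 - matLog hherm1)
      = ρ θt * ((-(β : ℂ)) • A θt) - ρ θt * ((-(β : ℂ)) • A θt1) + (c1 - c0) • ρ θt := by
    simp only [hlog0, hlog1, Algebra.algebraMap_eq_smul_one, mul_sub, mul_smul_comm, mul_one]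
    module
  have htrace_eq : (Matrix.trace (ρ θt * (matLog hherm0 - matLog hherm1))).re
      = (Matrix.trace (ρ θt * ((-(β : ℂ)) • A θt))).re
        - (Matrix.trace (ρ θt * ((-(β : ℂ)) • A θt1))).re + (c1 - c0) := by
    rw [hexpand, Matrix.trace_add, Matrix.trace_sub, Matrix.trace_smul, htrρ, Complex.real_smul,
      mul_one]
    simp [Complex.add_re, Complex.sub_re]
  rw [htrace_eq, h𝒰 θt1 θt, h𝒰 θt θt, h𝒢 θt1, h𝒢 θt, ← hZ0, ← hZ1, ← hc0, ← hc1]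
  field_simp
  ring
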